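/- Let (X,φ) and (Y,ψ) be Smale spaces. Suppose there exist a homeomorphism h : X → Y and continuous functions c₁ : X → ℤ and k₀ : X → ℤ_{≥0} such that (ψ^{c₁(x)}(h(x)), h(φ(x))) ∈ G_ψ^{a,k₀(x)} for all x ∈ X. Then for each n ∈ ℤ there exists a continuous function k_{1,n} : X → ℤ_{≥0} such that ξ₁^n(x) := (ψ^{c₁^n(x)}(h(x)), h(φ^n(x))) ∈ G_ψ^{a,k_{1,n}(x)} for all x ∈ X. In particular, ξ₁^n(x) ∈ G_ψ^a for every x, and the map ξ₁^n : X → G_ψ^a is continuous with respect to the inductive limit topology on G_ψ^a. -/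

import Mathlib

open Filter Set Topology

noncomputable section

/-- Integer iterate of a homeomorphism. -/
def hIter {X : Type*} [TopologicalSpace X] (φ : X ≃ₜ X) (n : ℤ) (x : X) : X :=
  ((φ.toEquiv : Equiv.Perm X) ^ n) x

/-- The cocycle sums `f^n` of a function `f : X → ℤ` along the iterates of `φ`:
`f^n(x) = Σ_{i=0}^{n-1} f(φ^i(x))` for `n > 0`, `f^0 = 0`, and
`f^n(x) = −Σ_{i=n}^{-1} f(φ^i(x))` for `n < 0`. -/
def cSum {X : Type*} [TopologicalSpace X] (φ : X ≃ₜ X) (f : X → ℤ) (n : ℤ) (x : X) : ℤ :=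
  if 0 ≤ n then ∑ i ∈ Finset.range n.toNat, f (hIter φ i x)
  else -∑ i ∈ Finset.range (-n).toNat, f (hIter φ (n + i) x)

/-- Stable asymptotic pairs (limit definition). -/
def asympS {X : Type*} [MetricSpace X] (φ : X ≃ₜ X) : Set (X × X) :=
  {p | Tendsto (fun n : ℕ => dist (hIter φ n p.1) (hIter φ n p.2)) atTop (nhds 0)}

/-- Unstable asymptotic pairs (limit definition). -/
def asympU {X : Type*} [MetricSpace X] (φ : X ≃ₜ X) : Set (X × X) :=
  {p | Tendsto (fun n : ℕ => dist (hIter φ (-(n : ℤ)) p.1) (hIter φ (-(n : ℤ)) p.2))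
    atTop (nhds 0)}

/-- Asymptotic pairs (limit definition). -/
def asympA {X : Type*} [MetricSpace X] (φ : X ≃ₜ X) : Set (X × X) := asympS φ ∩ asympU φ

/-- The `ω`-limit set of `x`. -/
def omegaSet {X : Type*} [MetricSpace X] (φ : X ≃ₜ X) (x : X) : Set X :=
  {z | ∃ n : ℕ → ℕ, StrictMono n ∧ Tendsto (fun i => hIter φ (n i) x) atTop (nhds z)}

/-- The `α`-limit set of `x`. -/
def alphaSet {X : Type*} [MetricSpace X] (φ : X ≃ₜ X) (x : X) : Set X :=
  {z | ∃ n : ℕ → ℤ, StrictAnti n ∧ Tendsto (fun i => hIter φ (n i) x) atTop (nhds z)}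

/-- A Smale space structure on a compact metric space `X`. -/
structure SmaleSpace (X : Type*) [MetricSpace X] [CompactSpace X] where
  phi : X ≃ₜ X
  eps : ℝ
  lam : ℝ
  br : X → X → X
  eps_pos : 0 < eps
  lam_pos : 0 < lam
  lam_lt_one : lam < 1
  br_cont : ContinuousOn (fun p : X × X => br p.1 p.2) {p : X × X | dist p.1 p.2 < eps}
  br_self : ∀ x : X, br x x = x
  br_assoc_left : ∀ x y z : X, dist x y < eps → dist (br x y) z < eps → dist x z < eps →
    br (br x y) z = br x z
  br_assoc_right : ∀ x y z : X, dist y z < eps → dist x (br y z) < eps → dist x z < eps →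
    br x (br y z) = br x z
  phi_br : ∀ x y : X, dist x y < eps → dist (phi x) (phi y) < eps →
    phi (br x y) = br (phi x) (phi y)
  contract_s : ∀ x y z : X, br y x = y → dist x y < eps → br z x = z → dist x z < eps →
    dist (phi y) (phi z) ≤ lam * dist y z
  contract_u : ∀ x y z : X, br x y = y → dist x y < eps → br x z = z → dist x z < eps →
    dist (phi.symm y) (phi.symm z) ≤ lam * dist y z

namespace SmaleSpace

variable {X Y : Type*} [MetricSpace X] [CompactSpace X] [MetricSpace Y] [CompactSpace Y]

/-- Local stable set `X^s(x,ε)`. -/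
def Xs (S : SmaleSpace X) (x : X) (ε : ℝ) : Set X := {y | S.br y x = y ∧ dist x y < ε}

/-- Local unstable set `X^u(x,ε)`. -/
def Xu (S : SmaleSpace X) (x : X) (ε : ℝ) : Set X := {y | S.br x y = y ∧ dist x y < ε}

def Gs0 (S : SmaleSpace X) : Set (X × X) := {p | p.2 ∈ S.Xs p.1 S.eps}

def Gu0 (S : SmaleSpace X) : Set (X × X) := {p | p.2 ∈ S.Xu p.1 S.eps}

/-- `G_φ^{s,n} = (φ×φ)^{-n}(G_φ^{s,0})`. -/
def GsN (S : SmaleSpace X) (n : ℤ) : Set (X × X) :=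
  {p | (hIter S.phi n p.1, hIter S.phi n p.2) ∈ S.Gs0}

/-- `G_φ^{u,n} = (φ×φ)^{n}(G_φ^{u,0})`. -/
def GuN (S : SmaleSpace X) (n : ℤ) : Set (X × X) :=
  {p | (hIter S.phi (-n) p.1, hIter S.phi (-n) p.2) ∈ S.Gu0}

def GaN (S : SmaleSpace X) (n : ℤ) : Set (X × X) := S.GsN n ∩ S.GuN n

/-- The asymptotic equivalence relation `G_φ^a = ⋃_{n ≥ 0} G_φ^{a,n}`. -/
def Ga (S : SmaleSpace X) : Set (X × X) := ⋃ n : ℕ, S.GaN n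

lemma gaN_subset_ga (S : SmaleSpace X) (n : ℕ) : S.GaN n ⊆ S.Ga :=
  Set.subset_iUnion (fun k : ℕ => S.GaN k) n

/-- The inductive limit topology on `G_φ^a`: a set is open iff its intersection with each
`G_φ^{a,n}` is open in the subspace topology from `X × X`. -/
def gaTopology (S : SmaleSpace X) : TopologicalSpace ↥S.Ga :=
  ⨆ n : ℕ, TopologicalSpace.coinduced (Set.inclusion (S.gaN_subset_ga n)) inferInstance

/-- Irreducibility of a Smale space. -/
def Irreducible (S : SmaleSpace X) : Prop :=
  ∀ U V : Set X, IsOpen U → U.Nonempty → IsOpen V → V.Nonempty →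
    ∃ K : ℕ, ((hIter S.phi K '' U) ∩ V).Nonempty

def IsPeriodicPoint (S : SmaleSpace X) (x : X) : Prop :=
  ∃ p : ℕ, 0 < p ∧ hIter S.phi p x = x

/-- `h` is a flip conjugacy between `(X,φ)` and `(Y,ψ)`. -/
def IsFlipConjugacy (S : SmaleSpace X) (T : SmaleSpace Y) (h : X ≃ₜ Y) : Prop :=
  (∀ x, h (S.phi x) = T.phi (h x)) ∨ (∀ x, h (S.phi x) = T.phi.symm (h x))

def FlipConjugate (S : SmaleSpace X) (T : SmaleSpace Y) : Prop :=
  ∃ h : X ≃ₜ Y, IsFlipConjugacy S T h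

/-- An isomorphism of the principal étale groupoids `G_φ^a` and `G_ψ^a`:
a bijection which is a homeomorphism for the inductive limit topologies and preserves
the (equivalence relation) groupoid structure. -/
structure GaIso (S : SmaleSpace X) (T : SmaleSpace Y) where
  toEquiv : ↥S.Ga ≃ ↥T.Ga
  cont : @Continuous _ _ S.gaTopology T.gaTopology toEquiv
  cont_symm : @Continuous _ _ T.gaTopology S.gaTopology toEquiv.symm
  map_mul : ∀ p q r : ↥S.Ga, (p : X × X).2 = (q : X × X).1 →
    (r : X × X) = ((p : X × X).1, (q : X × X).2) →
    (toEquiv p : Y × Y).2 = (toEquiv q : Y × Y).1 ∧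
      (toEquiv r : Y × Y) = ((toEquiv p : Y × Y).1, (toEquiv q : Y × Y).2)

end SmaleSpace

section Aux
variable {X : Type*} [TopologicalSpace X]

lemma hIter_zero (φ : X ≃ₜ X) (x : X) : hIter φ 0 x = x := rfl

lemma hIter_add (φ : X ≃ₜ X) (m k : ℤ) (x : X) :
    hIter φ (m + k) x = hIter φ m (hIter φ k x) := by
  simp [hIter, zpow_add, Equiv.Perm.mul_apply]

lemma hIter_one (φ : X ≃ₜ X) (x : X) : hIter φ 1 x = φ x := rfl

lemma hIter_neg_one (φ : X ≃ₜ X) (x : X) : hIter φ (-1) x = φ.symm x := by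
  simp [hIter, zpow_neg, Equiv.Perm.inv_def]

lemma continuous_hIter (φ : X ≃ₜ X) (m : ℤ) : Continuous (hIter φ m) := by
  induction m using Int.induction_on with
  | zero => exact continuous_id.congr fun x => (hIter_zero φ x).symm
  | succ k ih =>
      have h : ∀ x, hIter φ (k + 1) x = φ (hIter φ k x) := fun x => by
        rw [add_comm, hIter_add, hIter_one]
      exact (φ.continuous.comp ih).congr fun x => (h x).symm
  | pred k ih =>
      have h : ∀ x, hIter φ (-k - 1) x = φ.symm (hIter φ (-k) x) := fun x => by
        rw [show (-k - 1 : ℤ) = -1 + -k by ring, hIter_add, hIter_neg_one]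
      exact (φ.symm.continuous.comp ih).congr fun x => (h x).symm

lemma continuous_hIter_comp {Z : Type*} [TopologicalSpace Z]
    (φ : X ≃ₜ X) {m : Z → ℤ} {g : Z → X} (hm : Continuous m) (hg : Continuous g) :
    Continuous fun z => hIter φ (m z) (g z) := by
  rw [continuous_iff_continuousAt]
  intro z
  have hev : ∀ᶠ w in nhds z, m w = m z :=
    (hm.isOpen_preimage {m z} (isOpen_discrete _)).mem_nhds rfl
  refine ContinuousAt.congr (((continuous_hIter φ (m z)).comp hg).continuousAt) ?_
  filter_upwards [hev] with w hw
  rw [hw]; rfl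

end Aux

namespace SmaleSpace
variable {Y : Type*} [MetricSpace Y] [CompactSpace Y] (T : SmaleSpace Y)

lemma mem_Gs0 {a b : Y} : (a, b) ∈ T.Gs0 ↔ T.br b a = b ∧ dist a b < T.eps := Iff.rfl

lemma mem_Gu0 {a b : Y} : (a, b) ∈ T.Gu0 ↔ T.br a b = b ∧ dist a b < T.eps := Iff.rfl

lemma gs0_refl (y : Y) : (y, y) ∈ T.Gs0 :=
  ⟨T.br_self y, by simpa using T.eps_pos⟩

lemma gu0_refl (y : Y) : (y, y) ∈ T.Gu0 :=
  ⟨T.br_self y, by simpa using T.eps_pos⟩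

lemma gs0_step {a b : Y} (h : (a, b) ∈ T.Gs0) :
    (T.phi a, T.phi b) ∈ T.Gs0 ∧ dist (T.phi a) (T.phi b) ≤ T.lam * dist a b := by
  obtain ⟨hbr, hd⟩ := h
  have hda : dist a a < T.eps := by simpa using T.eps_pos
  have hcon : dist (T.phi a) (T.phi b) ≤ T.lam * dist a b :=
    T.contract_s a a b (T.br_self a) hda hbr hd
  have hd' : dist (T.phi a) (T.phi b) < T.eps := by
    calc dist (T.phi a) (T.phi b) ≤ T.lam * dist a b := hcon
    _ ≤ 1 * dist a b := mul_le_mul_of_nonneg_right T.lam_lt_one.le dist_nonneg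
    _ < T.eps := by simpa using hd
  have hbr' : T.phi (T.br b a) = T.br (T.phi b) (T.phi a) :=
    T.phi_br b a (by rwa [dist_comm]) (by rwa [dist_comm])
  rw [hbr] at hbr'
  exact ⟨⟨hbr'.symm, hd'⟩, hcon⟩

lemma gu0_step {a b : Y} (h : (a, b) ∈ T.Gu0) :
    (T.phi.symm a, T.phi.symm b) ∈ T.Gu0 ∧
      dist (T.phi.symm a) (T.phi.symm b) ≤ T.lam * dist a b := by
  obtain ⟨hbr, hd⟩ := h
  have hda : dist a a < T.eps := by simpa using T.eps_pos
  have hcon : dist (T.phi.symm a) (T.phi.symm b) ≤ T.lam * dist a b :=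
    T.contract_u a a b (T.br_self a) hda hbr hd
  have hd' : dist (T.phi.symm a) (T.phi.symm b) < T.eps := by
    calc dist (T.phi.symm a) (T.phi.symm b) ≤ T.lam * dist a b := hcon
    _ ≤ 1 * dist a b := mul_le_mul_of_nonneg_right T.lam_lt_one.le dist_nonneg
    _ < T.eps := by simpa using hd
  have hbr' : T.phi (T.br (T.phi.symm a) (T.phi.symm b)) =
      T.br (T.phi (T.phi.symm a)) (T.phi (T.phi.symm b)) :=
    T.phi_br _ _ hd' (by simpa using hd)
  simp only [Homeomorph.apply_symm_apply] at hbr'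
  rw [hbr] at hbr'
  have : T.br (T.phi.symm a) (T.phi.symm b) = T.phi.symm b := by
    have := congrArg T.phi.symm hbr'
    simpa using this
  exact ⟨⟨this, hd'⟩, hcon⟩

lemma gs0_iter {a b : Y} (h : (a, b) ∈ T.Gs0) (j : ℕ) :
    (hIter T.phi j a, hIter T.phi j b) ∈ T.Gs0 ∧
      dist (hIter T.phi j a) (hIter T.phi j b) ≤ T.lam ^ j * dist a b := by
  induction j with
  | zero => simpa [hIter_zero] using h
  | succ k ih =>
      have hs : ∀ y, hIter T.phi ((k + 1 : ℕ) : ℤ) y = T.phi (hIter T.phi k y) := fun y => by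
        rw [show ((k + 1 : ℕ) : ℤ) = 1 + (k : ℤ) by push_cast; ring, hIter_add, hIter_one]
      obtain ⟨hm, hd⟩ := ih
      obtain ⟨hm', hd'⟩ := T.gs0_step hm
      rw [hs a, hs b]
      refine ⟨hm', ?_⟩
      calc dist (T.phi (hIter T.phi k a)) (T.phi (hIter T.phi k b))
          ≤ T.lam * dist (hIter T.phi k a) (hIter T.phi k b) := hd'
      _ ≤ T.lam * (T.lam ^ k * dist a b) :=
          mul_le_mul_of_nonneg_left hd T.lam_pos.le
      _ = T.lam ^ (k + 1) * dist a b := by ring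

lemma gu0_iter {a b : Y} (h : (a, b) ∈ T.Gu0) (j : ℕ) :
    (hIter T.phi (-(j : ℤ)) a, hIter T.phi (-(j : ℤ)) b) ∈ T.Gu0 ∧
      dist (hIter T.phi (-(j : ℤ)) a) (hIter T.phi (-(j : ℤ)) b) ≤ T.lam ^ j * dist a b := by
  induction j with
  | zero => simpa [hIter_zero] using h
  | succ k ih =>
      have hs : ∀ y, hIter T.phi (-((k + 1 : ℕ) : ℤ)) y =
          T.phi.symm (hIter T.phi (-(k : ℤ)) y) := fun y => by
        rw [show (-((k + 1 : ℕ) : ℤ)) = -1 + -(k : ℤ) by push_cast; ring, hIter_add,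
          hIter_neg_one]
      obtain ⟨hm, hd⟩ := ih
      obtain ⟨hm', hd'⟩ := T.gu0_step hm
      rw [hs a, hs b]
      refine ⟨hm', ?_⟩
      calc dist (T.phi.symm (hIter T.phi (-(k : ℤ)) a)) (T.phi.symm (hIter T.phi (-(k : ℤ)) b))
          ≤ T.lam * dist (hIter T.phi (-(k : ℤ)) a) (hIter T.phi (-(k : ℤ)) b) := hd'
      _ ≤ T.lam * (T.lam ^ k * dist a b) := mul_le_mul_of_nonneg_left hd T.lam_pos.le
      _ = T.lam ^ (k + 1) * dist a b := by ring

lemma gs0_symm {a b : Y} (h : (a, b) ∈ T.Gs0) : (b, a) ∈ T.Gs0 := by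
  obtain ⟨hbr, hd⟩ := h
  have hda : dist a a < T.eps := by simpa using T.eps_pos
  have := T.br_assoc_right a b a (by rwa [dist_comm]) (by rwa [hbr]) hda
  rw [hbr, T.br_self] at this
  exact ⟨this, by rwa [dist_comm]⟩

lemma gu0_symm {a b : Y} (h : (a, b) ∈ T.Gu0) : (b, a) ∈ T.Gu0 := by
  obtain ⟨hbr, hd⟩ := h
  have hda : dist a a < T.eps := by simpa using T.eps_pos
  have := T.br_assoc_left a b a hd (by rw [hbr]; rwa [dist_comm]) hda
  rw [hbr, T.br_self] at this
  exact ⟨this, by rwa [dist_comm]⟩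


lemma hIter_succ_apply {Z : Type*} [TopologicalSpace Z] (φ : Z ≃ₜ Z) (m : ℤ) (y : Z) :
    hIter φ (m + 1) y = φ (hIter φ m y) := by
  have := hIter_add φ 1 m y
  rw [hIter_one] at this
  rw [add_comm m 1]; exact this

lemma hIter_pred_apply {Z : Type*} [TopologicalSpace Z] (φ : Z ≃ₜ Z) (m : ℤ) (y : Z) :
    hIter φ (m - 1) y = φ.symm (hIter φ m y) := by
  have := hIter_add φ (-1) m y
  rw [hIter_neg_one] at this
  rw [show m - 1 = -1 + m by ring]; exact this

lemma hIter_apply_phi {Z : Type*} [TopologicalSpace Z] (φ : Z ≃ₜ Z) (m : ℤ) (y : Z) :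
    hIter φ m (φ y) = hIter φ (m + 1) y := by
  have := hIter_add φ m 1 y
  rw [hIter_one] at this
  exact this.symm

lemma hIter_apply_symm {Z : Type*} [TopologicalSpace Z] (φ : Z ≃ₜ Z) (m : ℤ) (y : Z) :
    hIter φ m (φ.symm y) = hIter φ (m - 1) y := by
  have := hIter_add φ m (-1) y
  rw [hIter_neg_one] at this
  rw [show m - 1 = m + (-1) by ring]; exact this.symm

lemma gsN_succ {m : ℤ} {a b : Y} (h : (a, b) ∈ T.GsN m) : (a, b) ∈ T.GsN (m + 1) := by
  show (hIter T.phi (m+1) a, hIter T.phi (m+1) b) ∈ T.Gs0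
  rw [hIter_succ_apply, hIter_succ_apply]
  exact (T.gs0_step h).1

lemma guN_succ {m : ℤ} {a b : Y} (h : (a, b) ∈ T.GuN m) : (a, b) ∈ T.GuN (m + 1) := by
  show (hIter T.phi (-(m+1)) a, hIter T.phi (-(m+1)) b) ∈ T.Gu0
  rw [show (-(m+1) : ℤ) = -m - 1 by ring, hIter_pred_apply, hIter_pred_apply]
  exact (T.gu0_step h).1

lemma gaN_mono {m m' : ℤ} (hmm : m ≤ m') : T.GaN m ⊆ T.GaN m' := by
  refine Int.le_induction (motive := fun k _ => T.GaN m ⊆ T.GaN k) (fun p hp => hp) ?_ m' hmm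
  intro k _ ih p hp
  exact ⟨T.gsN_succ (ih hp).1, T.guN_succ (ih hp).2⟩

lemma gaN_symm {m : ℤ} {a b : Y} (h : (a, b) ∈ T.GaN m) : (b, a) ∈ T.GaN m :=
  ⟨T.gs0_symm h.1, T.gu0_symm h.2⟩

lemma gaN_refl (m : ℤ) (y : Y) : (y, y) ∈ T.GaN m :=
  ⟨T.gs0_refl _, T.gu0_refl _⟩

lemma gaN_shift_phi {m : ℤ} {a b : Y} (h : (a, b) ∈ T.GaN m) :
    (T.phi a, T.phi b) ∈ T.GaN (m + 1) := by
  constructor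
  · have h2 : (a, b) ∈ T.GsN (m + 1 + 1) := T.gsN_succ (T.gsN_succ h.1)
    show (hIter T.phi (m+1) (T.phi a), hIter T.phi (m+1) (T.phi b)) ∈ T.Gs0
    rw [hIter_apply_phi, hIter_apply_phi]
    exact h2
  · show (hIter T.phi (-(m+1)) (T.phi a), hIter T.phi (-(m+1)) (T.phi b)) ∈ T.Gu0
    rw [hIter_apply_phi, hIter_apply_phi, show (-(m+1) + 1 : ℤ) = -m by ring]
    exact h.2

lemma gaN_shift_symm {m : ℤ} {a b : Y} (h : (a, b) ∈ T.GaN m) :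
    (T.phi.symm a, T.phi.symm b) ∈ T.GaN (m + 1) := by
  constructor
  · show (hIter T.phi (m+1) (T.phi.symm a), hIter T.phi (m+1) (T.phi.symm b)) ∈ T.Gs0
    rw [hIter_apply_symm, hIter_apply_symm, show (m + 1 - 1 : ℤ) = m by ring]
    exact h.1
  · have h2 : (a, b) ∈ T.GuN (m + 1 + 1) := T.guN_succ (T.guN_succ h.2)
    show (hIter T.phi (-(m+1)) (T.phi.symm a), hIter T.phi (-(m+1)) (T.phi.symm b)) ∈ T.Gu0
    rw [hIter_apply_symm, hIter_apply_symm, show (-(m+1) - 1 : ℤ) = -(m+1+1) by ring]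
    exact h2

lemma gaN_shift (j : ℤ) {m : ℤ} {a b : Y} (h : (a, b) ∈ T.GaN m) :
    (hIter T.phi j a, hIter T.phi j b) ∈ T.GaN (m + j.natAbs) := by
  induction j using Int.induction_on with
  | zero => simpa [hIter_zero] using T.gaN_mono (by omega) h
  | succ k ih =>
      have h1 := T.gaN_shift_phi ih
      rw [hIter_succ_apply, hIter_succ_apply]
      exact T.gaN_mono (by omega) h1
  | pred k ih =>
      have h1 := T.gaN_shift_symm ih
      rw [show (-(k:ℤ) - 1) = -(k:ℤ) - 1 from rfl, hIter_pred_apply, hIter_pred_apply]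
      exact T.gaN_mono (by omega) h1

lemma gaN_trans {J : ℕ} (hJ : T.lam ^ J < 1 / 2) {m : ℤ} {a b c : Y}
    (h1 : (a, b) ∈ T.GaN m) (h2 : (b, c) ∈ T.GaN m) : (a, c) ∈ T.GaN (m + J) := by
  have hpow : (0 : ℝ) < T.lam ^ J := pow_pos T.lam_pos J
  have key : ∀ u v : Y, (u, v) ∈ T.Gs0 →
      dist (hIter T.phi J u) (hIter T.phi J v) < T.eps / 2 := by
    intro u v huv
    calc dist (hIter T.phi J u) (hIter T.phi J v) ≤ T.lam ^ J * dist u v :=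
          (T.gs0_iter huv J).2
      _ ≤ T.lam ^ J * T.eps := mul_le_mul_of_nonneg_left huv.2.le hpow.le
      _ < (1/2) * T.eps := mul_lt_mul_of_pos_right hJ T.eps_pos
      _ = T.eps / 2 := by ring
  have keyu : ∀ u v : Y, (u, v) ∈ T.Gu0 →
      dist (hIter T.phi (-(J:ℤ)) u) (hIter T.phi (-(J:ℤ)) v) < T.eps / 2 := by
    intro u v huv
    calc dist (hIter T.phi (-(J:ℤ)) u) (hIter T.phi (-(J:ℤ)) v) ≤ T.lam ^ J * dist u v :=
          (T.gu0_iter huv J).2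
      _ ≤ T.lam ^ J * T.eps := mul_le_mul_of_nonneg_left huv.2.le hpow.le
      _ < (1/2) * T.eps := mul_lt_mul_of_pos_right hJ T.eps_pos
      _ = T.eps / 2 := by ring
  constructor
  · have hsit : ∀ y : Y, hIter T.phi (m + (J:ℤ)) y = hIter T.phi J (hIter T.phi m y) :=
      fun y => by rw [add_comm, hIter_add]
    show (hIter T.phi (m + J) a, hIter T.phi (m + J) c) ∈ T.Gs0
    rw [hsit a, hsit c]
    set a' := hIter T.phi J (hIter T.phi m a) with ha'
    set b' := hIter T.phi J (hIter T.phi m b) with hb'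
    set c' := hIter T.phi J (hIter T.phi m c) with hc'
    have hab : (a', b') ∈ T.Gs0 := (T.gs0_iter h1.1 J).1
    have hbc : (b', c') ∈ T.Gs0 := (T.gs0_iter h2.1 J).1
    have dab : dist a' b' < T.eps / 2 := key _ _ h1.1
    have dbc : dist b' c' < T.eps / 2 := key _ _ h2.1
    have dac : dist a' c' < T.eps := by
      calc dist a' c' ≤ dist a' b' + dist b' c' := dist_triangle _ _ _
        _ < T.eps := by linarith
    have heps2 : T.eps / 2 < T.eps := by linarith [T.eps_pos]
    have := T.br_assoc_right c' b' a' (by rw [dist_comm]; exact dab.trans heps2)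
      (by rw [hab.1, dist_comm]; exact dbc.trans heps2) (by rwa [dist_comm])
    rw [hab.1, hbc.1] at this
    exact ⟨this.symm, dac⟩
  · have hsit : ∀ y : Y, hIter T.phi (-(m + (J:ℤ))) y =
        hIter T.phi (-(J:ℤ)) (hIter T.phi (-m) y) :=
      fun y => by rw [show (-(m + (J:ℤ))) = -(J:ℤ) + -m by ring, hIter_add]
    show (hIter T.phi (-(m + J)) a, hIter T.phi (-(m + J)) c) ∈ T.Gu0
    rw [hsit a, hsit c]
    set a' := hIter T.phi (-(J:ℤ)) (hIter T.phi (-m) a) with ha'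
    set b' := hIter T.phi (-(J:ℤ)) (hIter T.phi (-m) b) with hb'
    set c' := hIter T.phi (-(J:ℤ)) (hIter T.phi (-m) c) with hc'
    have hab : (a', b') ∈ T.Gu0 := (T.gu0_iter h1.2 J).1
    have hbc : (b', c') ∈ T.Gu0 := (T.gu0_iter h2.2 J).1
    have dab : dist a' b' < T.eps / 2 := keyu _ _ h1.2
    have dbc : dist b' c' < T.eps / 2 := keyu _ _ h2.2
    have dac : dist a' c' < T.eps := by
      calc dist a' c' ≤ dist a' b' + dist b' c' := dist_triangle _ _ _
        _ < T.eps := by linarith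
    have heps2 : T.eps / 2 < T.eps := by linarith [T.eps_pos]
    have := T.br_assoc_left a' b' c' (dab.trans heps2)
      (by rw [hab.1]; exact dbc.trans heps2) dac
    rw [hab.1, hbc.1] at this
    exact ⟨this.symm, dac⟩

end SmaleSpace

section CSum
variable {X : Type*} [TopologicalSpace X]

lemma cSum_zero (φ : X ≃ₜ X) (f : X → ℤ) (x : X) : cSum φ f 0 x = 0 := by
  simp [cSum]

lemma cSum_succ (φ : X ≃ₜ X) (f : X → ℤ) (n : ℤ) (x : X) :
    cSum φ f (n + 1) x = cSum φ f n x + f (hIter φ n x) := by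
  rcases le_or_gt 0 n with hn | hn
  · rw [cSum, cSum, if_pos (by omega), if_pos hn]
    have h1 : (n + 1).toNat = n.toNat + 1 := by omega
    rw [h1, Finset.sum_range_succ]
    have h2 : ((n.toNat : ℕ) : ℤ) = n := by omega
    rw [h2]
  · by_cases h0 : n + 1 = 0
    · have hn1 : n = -1 := by omega
      subst hn1
      norm_num [cSum, hIter]
    · rw [cSum, cSum, if_neg (by omega), if_neg (by omega)]
      have hN : (-n).toNat = (-(n + 1)).toNat + 1 := by omega
      rw [hN, Finset.sum_range_succ']
      have hcong : ∀ i ∈ Finset.range (-(n + 1)).toNat,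
          f (hIter φ (n + ((i : ℕ) + 1 : ℕ)) x) = f (hIter φ (n + 1 + (i : ℕ)) x) := by
        intro i _
        have : (n + ((i : ℕ) + 1 : ℕ) : ℤ) = n + 1 + (i : ℕ) := by push_cast; ring
        rw [this]
      rw [Finset.sum_congr rfl hcong]
      have : (n + ((0 : ℕ) : ℤ)) = n := by omega
      rw [this]
      ring

lemma continuous_cSum (φ : X ≃ₜ X) {f : X → ℤ} (hf : Continuous f) (n : ℤ) :
    Continuous (cSum φ f n) := by
  unfold cSum
  by_cases hn : 0 ≤ n
  · simp only [if_pos hn]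
    exact continuous_finset_sum _ fun i _ => hf.comp (continuous_hIter φ i)
  · simp only [if_neg hn]
    exact (continuous_finset_sum _ fun i _ => hf.comp (continuous_hIter φ _)).neg

lemma exists_nat_bound {W : Type*} [TopologicalSpace W] [CompactSpace W] {k : W → ℕ}
    (hk : Continuous k) : ∃ K : ℕ, ∀ x, k x ≤ K := by
  have hfin : (Set.range k).Finite := (isCompact_range hk).finite_of_discrete
  obtain ⟨K, hK⟩ := hfin.bddAbove
  exact ⟨K, fun x => hK (Set.mem_range_self x)⟩

end CSum

/-- If `(ψ^{c₁(x)}(h(x)), h(φ(x))) ∈ G_ψ^{a,k₀(x)}` for a continuous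
`k₀ : X → ℤ_{≥0}`, then for each `n ∈ ℤ` there is a continuous `k_{1,n} : X → ℤ_{≥0}` with
`ξ₁^n(x) = (ψ^{c₁^n(x)}(h(x)), h(φ^n(x))) ∈ G_ψ^{a,k_{1,n}(x)}` for all `x`; in particular
`ξ₁^n(x) ∈ G_ψ^a` and `ξ₁^n : X → G_ψ^a` is continuous for the inductive limit topology. -/
theorem xi_mem_gaN_and_continuous {X Y : Type*} [MetricSpace X] [CompactSpace X]
    [MetricSpace Y] [CompactSpace Y] (S : SmaleSpace X) (T : SmaleSpace Y)
    (h : X ≃ₜ Y) (c₁ : X → ℤ) (hc₁ : Continuous c₁)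
    (k₀ : X → ℕ) (hk₀ : Continuous k₀)
    (hK : ∀ x : X, (hIter T.phi (c₁ x) (h x), h (S.phi x)) ∈ T.GaN (k₀ x : ℤ)) :
    ∀ n : ℤ,
      (∃ k : X → ℕ, Continuous k ∧ ∀ x : X,
        (hIter T.phi (cSum S.phi c₁ n x) (h x), h (hIter S.phi n x)) ∈ T.GaN (k x : ℤ)) ∧
      (∃ hm : ∀ x : X,
          (hIter T.phi (cSum S.phi c₁ n x) (h x), h (hIter S.phi n x)) ∈ T.Ga,
        @Continuous X ↥T.Ga _ T.gaTopology
          fun x => ⟨(hIter T.phi (cSum S.phi c₁ n x) (h x), h (hIter S.phi n x)), hm x⟩) := by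
  obtain ⟨K, hKb⟩ := exists_nat_bound hk₀
  obtain ⟨C, hCb⟩ : ∃ C : ℕ, ∀ x, (c₁ x).natAbs ≤ C :=
    exists_nat_bound (by exact (continuous_of_discreteTopology (f := Int.natAbs)).comp hc₁)
  obtain ⟨J, hJ⟩ := exists_pow_lt_of_lt_one (by norm_num : (0:ℝ) < 1/2) T.lam_lt_one
  have main : ∀ n : ℤ, ∃ K1 : ℕ, ∀ x : X,
      (hIter T.phi (cSum S.phi c₁ n x) (h x), h (hIter S.phi n x)) ∈ T.GaN (K1 : ℤ) := by
    have step_up : ∀ n : ℤ, (∃ K1 : ℕ, ∀ x : X,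
        (hIter T.phi (cSum S.phi c₁ n x) (h x), h (hIter S.phi n x)) ∈ T.GaN (K1 : ℤ)) →
        ∃ K1 : ℕ, ∀ x : X,
          (hIter T.phi (cSum S.phi c₁ (n+1) x) (h x), h (hIter S.phi (n+1) x)) ∈
            T.GaN (K1 : ℤ) := by
      rintro n ⟨K1, hK1⟩
      refine ⟨max (K1 + C) K + J, fun x => ?_⟩
      set y := hIter S.phi n x with hy
      set c := c₁ y with hc
      have p2 := T.gaN_shift c (hK1 x)
      have e1 : hIter T.phi c (hIter T.phi (cSum S.phi c₁ n x) (h x)) =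
          hIter T.phi (cSum S.phi c₁ (n+1) x) (h x) := by
        rw [← hIter_add, cSum_succ, ← hy, ← hc, add_comm]
      rw [e1] at p2
      have p3 := hK y
      have e2 : S.phi y = hIter S.phi (n+1) x := (SmaleSpace.hIter_succ_apply S.phi n x).symm
      rw [e2] at p3
      have p2' : (hIter T.phi (cSum S.phi c₁ (n+1) x) (h x), hIter T.phi c (h y)) ∈
          T.GaN (max (K1 + C) K : ℤ) := by
        refine T.gaN_mono ?_ p2
        have := hCb y
        omega
      have p3' : (hIter T.phi c (h y), h (hIter S.phi (n+1) x)) ∈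
          T.GaN (max (K1 + C) K : ℤ) := by
        refine T.gaN_mono ?_ p3
        have := hKb y
        omega
      have := T.gaN_trans hJ p2' p3'
      refine T.gaN_mono ?_ this
      push_cast
      omega
    have step_down : ∀ n : ℤ, (∃ K1 : ℕ, ∀ x : X,
        (hIter T.phi (cSum S.phi c₁ n x) (h x), h (hIter S.phi n x)) ∈ T.GaN (K1 : ℤ)) →
        ∃ K1 : ℕ, ∀ x : X,
          (hIter T.phi (cSum S.phi c₁ (n-1) x) (h x), h (hIter S.phi (n-1) x)) ∈
            T.GaN (K1 : ℤ) := by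
      rintro n ⟨K1, hK1⟩
      refine ⟨max (K1 + C) (K + C) + J, fun x => ?_⟩
      set y := hIter S.phi (n-1) x with hy
      set c := c₁ y with hc
      have ecs : cSum S.phi c₁ n x = cSum S.phi c₁ (n-1) x + c := by
        have := cSum_succ S.phi c₁ (n-1) x
        rw [sub_add_cancel] at this
        rw [this, ← hy, ← hc]
      have ephi : hIter S.phi n x = S.phi y := by
        rw [hy, ← SmaleSpace.hIter_succ_apply, sub_add_cancel]
      have p1 := hK1 x
      rw [ecs, ephi] at p1
      have p2 := T.gaN_shift (-c) p1
      have e1 : hIter T.phi (-c) (hIter T.phi (cSum S.phi c₁ (n-1) x + c) (h x)) =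
          hIter T.phi (cSum S.phi c₁ (n-1) x) (h x) := by
        rw [← hIter_add]
        congr 1
        ring
      rw [e1] at p2
      have p3 := T.gaN_shift (-c) (hK y)
      have e2 : hIter T.phi (-c) (hIter T.phi (c₁ y) (h y)) = h y := by
        rw [← hIter_add, ← hc, neg_add_cancel, hIter_zero]
      rw [e2] at p3
      have p3s := T.gaN_symm p3
      have p2' : (hIter T.phi (cSum S.phi c₁ (n-1) x) (h x),
          hIter T.phi (-c) (h (S.phi y))) ∈ T.GaN (max (K1 + C) (K + C) : ℤ) := by
        refine T.gaN_mono ?_ p2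
        have := hCb y
        omega
      have p3' : (hIter T.phi (-c) (h (S.phi y)), h y) ∈
          T.GaN (max (K1 + C) (K + C) : ℤ) := by
        refine T.gaN_mono ?_ p3s
        have := hKb y
        have := hCb y
        omega
      have := T.gaN_trans hJ p2' p3'
      refine T.gaN_mono ?_ this
      push_cast
      omega
    intro n
    induction n using Int.induction_on with
    | zero =>
        refine ⟨0, fun x => ?_⟩
        have e0 : cSum S.phi c₁ 0 x = 0 := cSum_zero _ _ _
        rw [e0, hIter_zero, hIter_zero]
        exact T.gaN_refl 0 (h x)
    | succ k ih => exact step_up k ih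
    | pred k ih =>
        have := step_down (-(k:ℤ)) ih
        simpa [sub_eq_add_neg] using this
  intro n
  obtain ⟨K1, hK1⟩ := main n
  constructor
  · exact ⟨fun _ => K1, continuous_const, hK1⟩
  · refine ⟨fun x => Set.mem_iUnion.2 ⟨K1, hK1 x⟩, ?_⟩
    have hpair : Continuous fun x : X =>
        (hIter T.phi (cSum S.phi c₁ n x) (h x), h (hIter S.phi n x)) :=
      (continuous_hIter_comp T.phi (continuous_cSum S.phi hc₁ n) h.continuous).prodMk
        (h.continuous.comp (continuous_hIter S.phi n))
    have hg : Continuous fun x : X => (⟨_, hK1 x⟩ : ↥(T.GaN (K1 : ℤ))) :=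
      hpair.subtype_mk _
    unfold SmaleSpace.gaTopology
    rw [continuous_iff_coinduced_le]
    have hg' := continuous_iff_coinduced_le.mp hg
    have hmono := coinduced_mono (f := Set.inclusion (T.gaN_subset_ga K1)) hg'
    rw [coinduced_compose] at hmono
    refine le_trans ?_ (le_iSup (fun m : ℕ => TopologicalSpace.coinduced
      (Set.inclusion (T.gaN_subset_ga m)) inferInstance) K1)
    exact hmono
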